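/- Let V be a real inner product space, let κ ≥ 0 and u_σ ∈ ℝ be real numbers, let ρ_in, ρ_out ∈ ℝ and û_in, û_out ∈ V. Define the upwind values ρ_up = ρ_in and û_up = û_in if u_σ ≥ 0, and ρ_up = ρ_out, û_up = û_out if u_σ < 0. Then ⟨ u_σ ρ_up û_up − κ (ρ_out û_out − ρ_in û_in), û_out − û_in ⟩ − ( u_σ ρ_up − κ(ρ_out − ρ_in) ) · (‖û_out‖² − ‖û_in‖²)/2 = − ( (1/2) ρ_up |u_σ| + κ (ρ_out + ρ_in)/2 ) · ‖û_out − û_in‖². -/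

import Mathlib

open scoped RealInnerProductSpace

/-- Single-face upwind flux identity:
`⟨u_σ ρ_up û_up − κ(ρ_out û_out − ρ_in û_in), û_out − û_in⟩
  − (u_σ ρ_up − κ(ρ_out − ρ_in))·(‖û_out‖² − ‖û_in‖²)/2
  = −((1/2) ρ_up |u_σ| + κ (ρ_out + ρ_in)/2)·‖û_out − û_in‖²`,
where the upwind values are taken from the `in` side if `u_σ ≥ 0`
and from the `out` side otherwise. -/
theorem stmt6 {V : Type*} [NormedAddCommGroup V] [InnerProductSpace ℝ V]
    (κ uσ : ℝ) (hκ : 0 ≤ κ) (ρin ρout : ℝ) (uin uout : V)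
    (ρup : ℝ) (uup : V)
    (hρup : ρup = if 0 ≤ uσ then ρin else ρout)
    (huup : uup = if 0 ≤ uσ then uin else uout) :
    ⟪uσ • (ρup • uup) - κ • (ρout • uout - ρin • uin), uout - uin⟫
        - (uσ * ρup - κ * (ρout - ρin)) * ((‖uout‖ ^ 2 - ‖uin‖ ^ 2) / 2)
      = -((1 / 2) * ρup * |uσ| + κ * (ρout + ρin) / 2) * ‖uout - uin‖ ^ 2 := by
  have hsym := real_inner_comm uin uout
  have hin : ‖uin‖ ^ 2 = ⟪uin, uin⟫ := (real_inner_self_eq_norm_sq uin).symm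
  have hout : ‖uout‖ ^ 2 = ⟪uout, uout⟫ := (real_inner_self_eq_norm_sq uout).symm
  have hd : ‖uout - uin‖ ^ 2 = ⟪uout, uout⟫ - 2 * ⟪uin, uout⟫ + ⟪uin, uin⟫ := by
    rw [← real_inner_self_eq_norm_sq]
    simp only [inner_sub_left, inner_sub_right, hsym]
    ring
  rcases le_or_gt 0 uσ with h | h
  · rw [if_pos h] at hρup huup
    subst hρup huup
    rw [abs_of_nonneg h]
    simp only [inner_sub_left, inner_sub_right, real_inner_smul_left, hin, hout, hd, hsym]
    ring
  · rw [if_neg (not_le.mpr h)] at hρup huup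
    subst hρup huup
    rw [abs_of_neg h]
    simp only [inner_sub_left, inner_sub_right, real_inner_smul_left, hin, hout, hd, hsym]
    ring
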